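/- Let A be a ring, and let P^{-1} → P^0 → P^1 be a complex of flat A-modules such that for every A-module M of finite length the middle cohomology H^0(P ⊗_A M) vanishes. Then H^0(P ⊗_A M) = 0 for every A-module M, where A is assumed local Noetherian and the modules P^i finitely presented, and moreover P^0/im(P^{-1}) is A-flat and its formation commutes with arbitrary base change A → A'. -/

import Mathlib

section aux

open IsLocalRing LinearMap

variable {A : Type u} [CommRing A] [IsLocalRing A] [IsNoetherianRing A]

/-- The residue field of a local ring has finite length as a module over the ring. -/
theorem residueField_isFiniteLength :
    IsFiniteLength A (ResidueField A) := by
  have hmax : (maximalIdeal A).IsMaximal := inferInstance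
  have hsimple : IsSimpleModule A (A ⧸ maximalIdeal A) :=
    isSimpleModule_iff_isCoatom.mpr ((Ideal.isMaximal_def).mp hmax)
  have hsimple' : IsSimpleModule A (ResidueField A) := hsimple
  have : IsSimpleModule A ((ResidueField A) ⧸ (⊥ : Submodule A (ResidueField A))) :=
    IsSimpleModule.congr (Submodule.quotEquivOfEqBot (⊥ : Submodule A (ResidueField A)) rfl)
  exact IsFiniteLength.of_simple_quotient (N := (⊥ : Submodule A (ResidueField A)))
    IsFiniteLength.of_subsingleton

end aux

/-- Let `A` be a local Noetherian ring and
`P⁻¹ → P⁰ → P¹` a complex of finitely presented flat `A`-modules such that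
`H⁰(P ⊗ M) = 0` for every `A`-module `M` of finite length.  Then
`H⁰(P ⊗ M) = 0` for every `A`-module `M`, the quotient `P⁰ / im(P⁻¹)` is
`A`-flat, and its formation commutes with arbitrary base change: for every
`A`-module `M`, the kernel of `P⁰ ⊗ M → (P⁰/im P⁻¹) ⊗ M` is exactly the image
of `P⁻¹ ⊗ M`. -/
theorem stmt10 {A : Type u} [CommRing A] [IsLocalRing A] [IsNoetherianRing A]
    {Pneg P0 P1 : Type u}
    [AddCommGroup Pneg] [Module A Pneg] [Module.Finite A Pneg] [Module.Flat A Pneg]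
    [AddCommGroup P0] [Module A P0] [Module.Finite A P0] [Module.Flat A P0]
    [AddCommGroup P1] [Module A P1] [Module.Finite A P1] [Module.Flat A P1]
    (dneg : Pneg →ₗ[A] P0) (d0 : P0 →ₗ[A] P1)
    (hcomplex : d0 ∘ₗ dneg = 0)
    (hfl : ∀ (M : Type u) [AddCommGroup M] [Module A M], IsFiniteLength A M →
      ∀ x ∈ LinearMap.ker (LinearMap.rTensor M d0),
        x ∈ LinearMap.range (LinearMap.rTensor M dneg)) :
    (∀ (M : Type u) [AddCommGroup M] [Module A M],
      ∀ x ∈ LinearMap.ker (LinearMap.rTensor M d0),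
        x ∈ LinearMap.range (LinearMap.rTensor M dneg)) ∧
    Module.Flat A (P0 ⧸ LinearMap.range dneg) ∧
    (∀ (M : Type u) [AddCommGroup M] [Module A M],
      LinearMap.ker (LinearMap.rTensor M (LinearMap.range dneg).mkQ) =
        LinearMap.range (LinearMap.rTensor M dneg)) := by
  classical
  set B : Submodule A P0 := LinearMap.range dneg with hB
  -- the complex condition as a range/ker inclusion
  have hle : B ≤ LinearMap.ker d0 := by
    rintro x ⟨y, rfl⟩
    simp only [LinearMap.mem_ker]
    exact DFunLike.congr_fun hcomplex y
  -- `W = P⁰ / im dneg` and the induced map `e : W → P¹`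
  set W := P0 ⧸ B
  set e : W →ₗ[A] P1 := Submodule.liftQ B d0 hle with he
  have hemkQ : e ∘ₗ B.mkQ = d0 := Submodule.liftQ_mkQ B d0 hle
  -- exactness of `P⁻¹ → P⁰ → W → 0`
  have hexact : Function.Exact dneg B.mkQ := by
    intro x
    simp [Submodule.Quotient.mk_eq_zero, hB, LinearMap.mem_range]
  have hsurj : Function.Surjective B.mkQ := Submodule.mkQ_surjective B
  -- right exactness of tensoring
  have htens : ∀ (M : Type u) [AddCommGroup M] [Module A M],
      Function.Exact (LinearMap.rTensor M dneg) (LinearMap.rTensor M B.mkQ) :=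
    fun M _ _ => rTensor_exact M hexact hsurj
  -- Step 1: `e ⊗ k` is injective where `k` is the residue field
  set k := IsLocalRing.ResidueField A
  have hk : IsFiniteLength A k := residueField_isFiniteLength
  have hrinj : Function.Injective (LinearMap.rTensor k e) := by
    rw [injective_iff_map_eq_zero]
    intro x hx
    obtain ⟨y, rfl⟩ := LinearMap.rTensor_surjective k hsurj x
    have hy : y ∈ LinearMap.ker (LinearMap.rTensor k d0) := by
      rw [LinearMap.mem_ker, ← hemkQ, LinearMap.rTensor_comp, LinearMap.comp_apply]
      exact hx
    obtain ⟨z, rfl⟩ := hfl k hk y hy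
    rw [← LinearMap.comp_apply, ← LinearMap.rTensor_comp]
    have : B.mkQ ∘ₗ dneg = 0 := by
      ext t
      simp [hB, Submodule.Quotient.mk_eq_zero]
    rw [this]
    simp
  -- `P¹` is free since it is finitely presented and flat over a local ring
  have : Module.FinitePresentation A P1 := Module.finitePresentation_of_finite A P1
  have : Module.Free A P1 := Module.free_of_flat_of_isLocalRing
  -- Step 2: `e` is split injective
  obtain ⟨l, hl⟩ := (IsLocalRing.split_injective_iff_lTensor_residueField_injective e).mpr
    ((LinearMap.lTensor_inj_iff_rTensor_inj k e).mpr hrinj)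
  -- Step 3: for every `M`, `e ⊗ M` is injective
  have heinj : ∀ (M : Type u) [AddCommGroup M] [Module A M],
      Function.Injective (LinearMap.rTensor M e) := by
    intro M _ _
    have : LinearMap.rTensor M l ∘ₗ LinearMap.rTensor M e = LinearMap.id := by
      rw [← LinearMap.rTensor_comp, hl, LinearMap.rTensor_id]
    exact Function.HasLeftInverse.injective ⟨LinearMap.rTensor M l,
      fun x => DFunLike.congr_fun this x⟩
  -- Part 3: base change for the quotient
  have part3 : ∀ (M : Type u) [AddCommGroup M] [Module A M],
      LinearMap.ker (LinearMap.rTensor M B.mkQ) =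
        LinearMap.range (LinearMap.rTensor M dneg) := by
    intro M _ _
    exact (htens M).linearMap_ker_eq
  -- Part 1: vanishing of `H⁰(P ⊗ M)` for all `M`
  have part1 : ∀ (M : Type u) [AddCommGroup M] [Module A M],
      ∀ x ∈ LinearMap.ker (LinearMap.rTensor M d0),
        x ∈ LinearMap.range (LinearMap.rTensor M dneg) := by
    intro M _ _ x hx
    rw [← part3 M, LinearMap.mem_ker]
    apply heinj M
    rw [map_zero, ← LinearMap.comp_apply, ← LinearMap.rTensor_comp, hemkQ]
    exact hx
  -- Part 2: `W` is flat because it is a retract of the free module `P¹`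
  have : Module.Projective A P1 := inferInstance
  have hproj : Module.Projective A W := Module.Projective.of_split e l hl
  exact ⟨part1, Module.Flat.of_projective, part3⟩
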